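/- For each i ∈ {1,…,n} let X_i and Y_i be nonnegative integrable real random variables, with the family (X_1,…,X_n) mutually independent and the family (Y_1,…,Y_n) mutually independent. Suppose that for every i and every x ≥ 0, ∫_0^x (F_{Y_i}(t) − F_{X_i}(t)) dt ≥ 0, where F denotes the cumulative distribution function. Then for every nondecreasing concave function u : [0,∞) → ℝ such that u(X_1⋯X_n) and u(Y_1⋯Y_n) are integrable, E[u(X_1 X_2 ⋯ X_n)] ≥ E[u(Y_1 Y_2 ⋯ Y_n)]; that is, second-order stochastic dominance in every period is sufficient for second-order stochastic dominance of the multi-period (product) returns. -/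

import Mathlib

open MeasureTheory ProbabilityTheory Set Filter Topology
open scoped ENNReal NNReal

section Aux

variable {u : ℝ → ℝ}

/-- affine upper bound for a monotone function concave on `[0,∞)`. -/
lemma ssd_aux_ubound (hu : Monotone u) (huc : ConcaveOn ℝ (Set.Ici 0) u) {t : ℝ} (ht : 0 ≤ t) :
    u t ≤ u 2 + (u 2 - u 1) * t := by
  have hK : 0 ≤ u 2 - u 1 := sub_nonneg.2 (hu one_le_two)
  rcases le_or_gt t 2 with h | h
  · calc u t ≤ u 2 := hu h
      _ ≤ u 2 + (u 2 - u 1) * t := le_add_of_nonneg_right (mul_nonneg hK ht)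
  · have hs := huc.slope_anti_adjacent (x := 1) (y := 2) (z := t)
      (by norm_num : (1:ℝ) ∈ Set.Ici 0) (le_of_lt (lt_trans two_pos h) : (0:ℝ) ≤ t)
      one_lt_two h
    have h2 : u t - u 2 ≤ (u 2 - u 1) * (t - 2) := by
      have ht2 : (0:ℝ) < t - 2 := by linarith
      rw [show (2:ℝ) - 1 = 1 by norm_num, div_one] at hs
      exact (div_le_iff₀ ht2).mp hs
    nlinarith [mul_nonneg hK ht]

lemma ssd_aux_comp_integrable {Ω : Type*} [MeasurableSpace Ω] {P : Measure Ω}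
    [IsProbabilityMeasure P] (hu : Monotone u) (huc : ConcaveOn ℝ (Set.Ici 0) u)
    {Z : Ω → ℝ} (hZ : Measurable Z) (hZnn : ∀ ω, 0 ≤ Z ω) (hZi : Integrable Z P) :
    Integrable (fun ω => u (Z ω)) P := by
  have hum : Measurable u := hu.measurable
  have hK : 0 ≤ u 2 - u 1 := sub_nonneg.2 (hu one_le_two)
  refine Integrable.mono' ((integrable_const (|u 0| + |u 2|)).add (hZi.const_mul (u 2 - u 1)))
    (hum.comp hZ).aestronglyMeasurable (Filter.Eventually.of_forall fun ω => ?_)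
  rw [Real.norm_eq_abs, abs_le]
  constructor
  · have h1 : u 0 ≤ u (Z ω) := hu (hZnn ω)
    have h2 : 0 ≤ (u 2 - u 1) * Z ω := mul_nonneg hK (hZnn ω)
    have : -|u 0| ≤ u 0 := neg_abs_le _
    simp only [Pi.add_apply]
    nlinarith [abs_nonneg (u 2)]
  · have h1 := ssd_aux_ubound hu huc (hZnn ω)
    have : u 2 ≤ |u 2| := le_abs_self _
    simp only [Pi.add_apply]
    nlinarith [abs_nonneg (u 0)]

lemma ssd_aux_slope_anti (huc : ConcaveOn ℝ (Set.Ici 0) u) {t : ℝ} (ht : 0 < t) :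
    AntitoneOn (slope u t) (Set.Ioi t) := by
  intro y hy z hz hyz
  rcases eq_or_lt_of_le hyz with rfl | hyz'
  · exact le_rfl
  have hty : t < y := hy
  have htz : t < z := hz
  have h := huc.neg.secant_mono (a := t) (x := y) (y := z) (le_of_lt ht)
    (le_of_lt (lt_trans ht hty)) (le_of_lt (lt_trans ht htz)) (ne_of_gt hty) (ne_of_gt htz) hyz
  simp only [Pi.neg_apply] at h
  rw [show -u y - -u t = -(u y - u t) by ring, show -u z - -u t = -(u z - u t) by ring,
    neg_div, neg_div, neg_le_neg_iff] at h
  rw [slope_def_field, slope_def_field]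
  exact h

lemma ssd_aux_slope_bdd (huc : ConcaveOn ℝ (Set.Ici 0) u) {t : ℝ} (ht : 0 < t) :
    BddAbove (slope u t '' Set.Ioi t) := by
  refine ⟨(u t - u (t / 2)) / (t - t / 2), ?_⟩
  rintro _ ⟨y, hy, rfl⟩
  have hty : t < y := hy
  have h := huc.slope_anti_adjacent (x := t / 2) (y := t) (z := y)
    (le_of_lt (half_pos ht)) (le_of_lt (lt_trans ht hty)) (half_lt_self ht) hty
  rw [slope_def_field]
  exact h

/-- right derivative of a concave function -/
noncomputable def ssdRD (u : ℝ → ℝ) (t : ℝ) : ℝ := sSup (slope u t '' Set.Ioi t)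

lemma ssd_aux_rd_hasDeriv (huc : ConcaveOn ℝ (Set.Ici 0) u) {t : ℝ} (ht : 0 < t) :
    HasDerivWithinAt u (ssdRD u t) (Set.Ioi t) t := by
  rw [hasDerivWithinAt_iff_tendsto_slope' (notMem_Ioi_self)]
  exact (ssd_aux_slope_anti huc ht).tendsto_nhdsGT (ssd_aux_slope_bdd huc ht)

lemma ssd_aux_rd_nonneg (hu : Monotone u) (huc : ConcaveOn ℝ (Set.Ici 0) u)
    {t : ℝ} (ht : 0 < t) : 0 ≤ ssdRD u t := by
  have hmem : slope u t (t + 1) ∈ slope u t '' Set.Ioi t :=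
    Set.mem_image_of_mem _ (by simp : t + 1 ∈ Set.Ioi t)
  have h0 : 0 ≤ slope u t (t + 1) := by
    rw [slope_def_field]
    exact div_nonneg (sub_nonneg.2 (hu (by linarith))) (by linarith)
  exact le_trans h0 (le_csSup (ssd_aux_slope_bdd huc ht) hmem)

lemma ssd_aux_rd_anti (huc : ConcaveOn ℝ (Set.Ici 0) u) :
    AntitoneOn (ssdRD u) (Set.Ioi 0) := by
  intro s hs t ht hst
  rcases eq_or_lt_of_le hst with rfl | h
  · exact le_rfl
  have hs0 : (0:ℝ) < s := hs
  have ht0 : (0:ℝ) < t := ht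
  have h1 : ssdRD u t ≤ slope u s t := by
    refine csSup_le (Set.Nonempty.image _ ⟨t + 1, by simp⟩) ?_
    rintro _ ⟨y, hy, rfl⟩
    have hty : t < y := hy
    have := huc.slope_anti_adjacent (x := s) (y := t) (z := y)
      (le_of_lt hs0) (le_of_lt (lt_trans ht0 hty)) h hty
    rw [slope_def_field, slope_def_field]
    exact this
  exact le_trans h1 (le_csSup (ssd_aux_slope_bdd huc hs0) (Set.mem_image_of_mem _ h))

noncomputable def ssdPhi (u : ℝ → ℝ) (t : ℝ) : ℝ≥0∞ :=
  if 0 < t then ENNReal.ofReal (ssdRD u t) else ⊤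

noncomputable def ssdL (u : ℝ → ℝ) : ℝ := sInf (u '' Set.Ioi 0)

lemma ssdL_le (hu : Monotone u) {t : ℝ} (ht : 0 < t) : ssdL u ≤ u t :=
  csInf_le ⟨u 0, by rintro _ ⟨y, hy, rfl⟩; exact hu (le_of_lt hy)⟩ (Set.mem_image_of_mem _ ht)

lemma ssdL_ge (hu : Monotone u) : u 0 ≤ ssdL u :=
  le_csInf (Set.Nonempty.image _ ⟨1, Set.mem_Ioi.2 one_pos⟩)
    (by rintro _ ⟨y, hy, rfl⟩; exact hu (le_of_lt hy))

lemma ssdPhi_anti (huc : ConcaveOn ℝ (Set.Ici 0) u) : Antitone (ssdPhi u) := by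
  intro a b hab
  unfold ssdPhi
  by_cases hb : 0 < b
  · rw [if_pos hb]
    by_cases ha : 0 < a
    · rw [if_pos ha]
      exact ENNReal.ofReal_le_ofReal (ssd_aux_rd_anti huc ha hb hab)
    · rw [if_neg ha]; exact le_top
  · rw [if_neg hb, if_neg (fun ha => hb (lt_of_lt_of_le ha hab))]

lemma ssdPhi_meas (huc : ConcaveOn ℝ (Set.Ici 0) u) : Measurable (ssdPhi u) :=
  (ssdPhi_anti huc).measurable

lemma ssd_aux_claim1 (hu : Monotone u) (huc : ConcaveOn ℝ (Set.Ici 0) u)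
    {x : ℝ} (hx : 0 < x) :
    ∫⁻ t in Set.Ioo 0 x, ssdPhi u t = ENNReal.ofReal (u x - ssdL u) := by
  -- FTC on [a, x] for 0 < a ≤ x
  have hcont : ContinuousOn u (Set.Ioi 0) :=
    (huc.subset (Set.Ioi_subset_Ici le_rfl) (convex_Ioi 0)).continuousOn isOpen_Ioi
  have FTCn : ∀ a : ℝ, 0 < a → a ≤ x →
      ∫⁻ t in Set.Ioc a x, ssdPhi u t = ENNReal.ofReal (u x - u a) := by
    intro a ha hax
    have huIcc : Set.uIcc a x = Set.Icc a x := Set.uIcc_of_le hax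
    have hIccsub : Set.Icc a x ⊆ Set.Ioi 0 := fun t ht => lt_of_lt_of_le ha ht.1
    have hanti2 : AntitoneOn (ssdRD u) (Set.uIcc a x) := by
      rw [huIcc]
      exact (ssd_aux_rd_anti huc).mono hIccsub
    have hii : IntervalIntegrable (ssdRD u) volume a x := hanti2.intervalIntegrable
    have hFTC : ∫ y in a..x, ssdRD u y = u x - u a := by
      apply intervalIntegral.integral_eq_sub_of_hasDeriv_right
      · rw [huIcc]; exact hcont.mono hIccsub
      · intro t ht
        rw [min_eq_left hax, max_eq_right hax] at ht
        exact ssd_aux_rd_hasDeriv huc (lt_trans ha ht.1)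
      · exact hii
    have hIntOn : IntegrableOn (ssdRD u) (Set.Ioc a x) volume := by
      rcases hii with ⟨h1, _⟩
      exact h1
    have hnn : ∀ t ∈ Set.Ioc a x, 0 ≤ ssdRD u t := fun t ht =>
      ssd_aux_rd_nonneg hu huc (lt_trans ha ht.1)
    calc ∫⁻ t in Set.Ioc a x, ssdPhi u t
        = ∫⁻ t in Set.Ioc a x, ENNReal.ofReal (ssdRD u t) := by
          apply setLIntegral_congr_fun measurableSet_Ioc
          exact fun t ht => if_pos (lt_trans ha ht.1)
      _ = ENNReal.ofReal (∫ t in Set.Ioc a x, ssdRD u t) := by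
          rw [ofReal_integral_eq_lintegral_ofReal hIntOn
            ((ae_restrict_iff' measurableSet_Ioc).2 (Filter.Eventually.of_forall hnn))]
      _ = ENNReal.ofReal (u x - u a) := by
          rw [← intervalIntegral.integral_of_le hax, hFTC]
  -- monotone approximation from inside
  set e : ℕ → ℝ := fun n => x / (n + 2) with he
  have he_pos : ∀ n, 0 < e n := fun n => div_pos hx (by positivity)
  have he_lt : ∀ n, e n < x := fun n => by
    rw [he]
    rw [div_lt_iff₀ (by positivity : (0:ℝ) < (n:ℝ) + 2)]
    nlinarith [hx, Nat.cast_nonneg (α := ℝ) n]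
  have he_anti : Antitone e := fun n m hnm => by
    apply div_le_div_of_nonneg_left (le_of_lt hx) (by positivity)
    have : (n:ℝ) ≤ m := Nat.cast_le.2 hnm
    linarith
  have he_tendsto : Filter.Tendsto e Filter.atTop (𝓝 0) := by
    apply Filter.Tendsto.div_atTop (tendsto_const_nhds)
    exact Filter.tendsto_atTop_add_const_right _ 2 tendsto_natCast_atTop_atTop
  have hU : ∀ t, t ∈ Set.Ioc 0 x ↔ ∃ n, t ∈ Set.Ioc (e n) x := by
    intro t
    constructor
    · rintro ⟨ht0, htx⟩
      have : ∀ᶠ n in Filter.atTop, e n < t :=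
        he_tendsto.eventually_lt_const ht0
      obtain ⟨n, hn⟩ := this.exists
      exact ⟨n, hn, htx⟩
    · rintro ⟨n, hn, htx⟩
      exact ⟨lt_trans (he_pos n) hn, htx⟩
  -- rewrite integral over Ioo as Ioc
  have hIoo : ∫⁻ t in Set.Ioo 0 x, ssdPhi u t = ∫⁻ t in Set.Ioc 0 x, ssdPhi u t := by
    rw [Measure.restrict_congr_set Ioo_ae_eq_Ioc]
  set f : ℕ → ℝ → ℝ≥0∞ := fun n => (Set.Ioc (e n) x).indicator (ssdPhi u) with hf
  have hfmeas : ∀ n, Measurable (f n) := fun n =>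
    (ssdPhi_meas huc).indicator measurableSet_Ioc
  have hfmono : Monotone f := by
    intro n m hnm t
    apply Set.indicator_le_indicator_of_subset
    · exact Set.Ioc_subset_Ioc_left (he_anti hnm)
    · exact fun a => zero_le
  have hfsup : ∀ t, ⨆ n, f n t = (Set.Ioc 0 x).indicator (ssdPhi u) t := by
    intro t
    by_cases ht : t ∈ Set.Ioc 0 x
    · rw [Set.indicator_of_mem ht]
      obtain ⟨n, hn⟩ := (hU t).1 ht
      apply le_antisymm
      · exact iSup_le fun m => by
          by_cases hm : t ∈ Set.Ioc (e m) x
          · rw [hf]; simp only [Set.indicator_of_mem hm]; exact le_rfl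
          · rw [hf]; simp only [Set.indicator_of_notMem hm]; exact zero_le
      · calc ssdPhi u t = f n t := by rw [hf]; simp only [Set.indicator_of_mem hn]
          _ ≤ ⨆ m, f m t := le_iSup (fun m => f m t) n
    · rw [Set.indicator_of_notMem ht]
      have : ∀ n, f n t = 0 := fun n => by
        rw [hf]
        apply Set.indicator_of_notMem
        exact fun hm => ht ((hU t).2 ⟨n, hm⟩)
      simp [this]
  have hstep : ∫⁻ t in Set.Ioc 0 x, ssdPhi u t = ⨆ n, ENNReal.ofReal (u x - u (e n)) := by
    rw [← lintegral_indicator measurableSet_Ioc]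
    have : ∀ t, (Set.Ioc 0 x).indicator (ssdPhi u) t = ⨆ n, f n t := fun t => (hfsup t).symm
    rw [lintegral_congr this, lintegral_iSup hfmeas hfmono]
    congr 1
    funext n
    rw [hf]
    simp only
    rw [lintegral_indicator measurableSet_Ioc]
    exact FTCn (e n) (he_pos n) (le_of_lt (he_lt n))
  -- limit identification
  have hL : Filter.Tendsto (fun n => u (e n)) Filter.atTop (𝓝 (ssdL u)) := by
    have h1 : Filter.Tendsto u (𝓝[>] (0:ℝ)) (𝓝 (ssdL u)) := hu.tendsto_nhdsGT 0
    apply h1.comp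
    apply tendsto_nhdsWithin_of_tendsto_nhds_of_eventually_within _ he_tendsto
    exact Filter.Eventually.of_forall fun n => he_pos n
  have h2 : Filter.Tendsto (fun n => ENNReal.ofReal (u x - u (e n))) Filter.atTop
      (𝓝 (ENNReal.ofReal (u x - ssdL u))) :=
    (ENNReal.continuous_ofReal.tendsto _).comp (tendsto_const_nhds.sub hL)
  have h3 : Monotone fun n => ENNReal.ofReal (u x - u (e n)) := by
    intro n m hnm
    apply ENNReal.ofReal_le_ofReal
    have := hu (he_anti hnm)
    linarith
  have h4 := tendsto_atTop_iSup h3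
  rw [hIoo, hstep]
  exact tendsto_nhds_unique h4 h2

lemma ssd_aux_vint {Ω : Type*} [MeasurableSpace Ω] {P : Measure Ω} [IsProbabilityMeasure P]
    (hu : Monotone u) (huc : ConcaveOn ℝ (Set.Ici 0) u)
    {Z : Ω → ℝ} (hZ : Measurable Z) (hZnn : ∀ ω, 0 ≤ Z ω) (hZi : Integrable Z P) :
    Integrable (fun ω => max (u (Z ω)) (ssdL u)) P := by
  have hvm : Monotone (fun t => max (u t) (ssdL u)) := fun a b hab => max_le_max (hu hab) le_rfl
  refine Integrable.mono' (((ssd_aux_comp_integrable hu huc hZ hZnn hZi).abs).add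
    (integrable_const |ssdL u|)) (hvm.measurable.comp hZ).aestronglyMeasurable
    (Filter.Eventually.of_forall fun ω => ?_)
  rw [Real.norm_eq_abs]
  calc |max (u (Z ω)) (ssdL u)| ≤ max |u (Z ω)| |ssdL u| := abs_max_le_max_abs_abs
    _ ≤ |u (Z ω)| + |ssdL u| := max_le (le_add_of_nonneg_right (abs_nonneg _))
        (le_add_of_nonneg_left (abs_nonneg _))

lemma ssd_aux_repr {Ω : Type*} [MeasurableSpace Ω] (P : Measure Ω) [IsProbabilityMeasure P]
    (hu : Monotone u) (huc : ConcaveOn ℝ (Set.Ici 0) u)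
    {Z : Ω → ℝ} (hZ : Measurable Z) (hZnn : ∀ ω, 0 ≤ Z ω) (hZi : Integrable Z P) :
    ENNReal.ofReal ((∫ ω, max (u (Z ω)) (ssdL u) ∂P) - ssdL u)
      = ∫⁻ t in Set.Ioi 0, ssdPhi u t * P {ω | t < Z ω} := by
  have hvint := ssd_aux_vint hu huc hZ hZnn hZi
  -- pointwise claim
  have claim_pt : ∀ ω, ENNReal.ofReal (max (u (Z ω)) (ssdL u) - ssdL u)
      = ∫⁻ t in Set.Ioi 0, ssdPhi u t * (if t < Z ω then 1 else 0) := by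
    intro ω
    have h1 : ∫⁻ t in Set.Ioi 0, ssdPhi u t * (if t < Z ω then 1 else 0)
        = ∫⁻ t in Set.Ioo 0 (Z ω), ssdPhi u t := by
      have e1 : ∀ t, ssdPhi u t * (if t < Z ω then 1 else 0)
          = (Set.Iio (Z ω)).indicator (ssdPhi u) t := by
        intro t
        by_cases ht : t < Z ω
        · rw [if_pos ht, mul_one, Set.indicator_of_mem (Set.mem_Iio.2 ht)]
        · rw [if_neg ht, mul_zero, Set.indicator_of_notMem (fun h => ht (Set.mem_Iio.1 h))]
      rw [lintegral_congr e1, lintegral_indicator measurableSet_Iio,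
        Measure.restrict_restrict measurableSet_Iio, Set.Iio_inter_Ioi]
    rw [h1]
    rcases eq_or_lt_of_le (hZnn ω) with h0 | h0
    · rw [← h0]
      simp only [Set.Ioo_self, Measure.restrict_empty, lintegral_zero_measure]
      rw [max_eq_right (ssdL_ge hu), sub_self, ENNReal.ofReal_zero]
    · rw [ssd_aux_claim1 hu huc h0, max_eq_left (ssdL_le hu h0)]
  -- LHS as a lintegral over Ω
  have lhs1 : ENNReal.ofReal ((∫ ω, max (u (Z ω)) (ssdL u) ∂P) - ssdL u)
      = ∫⁻ ω, ENNReal.ofReal (max (u (Z ω)) (ssdL u) - ssdL u) ∂P := by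
    have : (∫ ω, max (u (Z ω)) (ssdL u) ∂P) - ssdL u
        = ∫ ω, (max (u (Z ω)) (ssdL u) - ssdL u) ∂P := by
      rw [integral_sub hvint (integrable_const _), integral_const]
      simp
    have hint2 : Integrable (fun ω => max (u (Z ω)) (ssdL u) - ssdL u) P := by
      exact hvint.sub (integrable_const (ssdL u))
    rw [this, ofReal_integral_eq_lintegral_ofReal hint2
      (Filter.Eventually.of_forall fun ω => sub_nonneg.2 (le_max_right _ _))]
  rw [lhs1, lintegral_congr claim_pt]
  -- Tonelli swap
  have hjoint : Measurable (Function.uncurry fun (ω : Ω) (t : ℝ) =>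
      ssdPhi u t * (if t < Z ω then 1 else 0) : Ω × ℝ → ℝ≥0∞) := by
    have hset : MeasurableSet {p : Ω × ℝ | p.2 < Z p.1} :=
      measurableSet_lt measurable_snd (hZ.comp measurable_fst)
    exact ((ssdPhi_meas huc).comp measurable_snd).mul
      (Measurable.ite hset measurable_const measurable_const)
  rw [lintegral_lintegral_swap hjoint.aemeasurable]
  apply lintegral_congr
  intro t
  rw [lintegral_const_mul _ (Measurable.ite (measurableSet_lt measurable_const hZ)
    measurable_const measurable_const)]
  congr 1
  have e2 : ∀ ω, (if t < Z ω then (1:ℝ≥0∞) else 0) = ({ω | t < Z ω}).indicator 1 ω := by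
    intro ω
    by_cases h : t < Z ω <;> simp [Set.indicator_apply, Set.mem_setOf_eq, h]
  rw [lintegral_congr e2, lintegral_indicator_one (measurableSet_lt measurable_const hZ)]

lemma ssd_aux_core (hu : Monotone u) (huc : ConcaveOn ℝ (Set.Ici 0) u)
    {D : ℝ → ℝ} (hDm : Measurable D) (hDb : ∀ t, |D t| ≤ 2)
    (hint : IntegrableOn D (Set.Ioi 0) volume)
    (hssd : ∀ x : ℝ, 0 ≤ x → 0 ≤ ∫ t in Set.Icc 0 x, D t) :
    ∫⁻ t in Set.Ioi 0, ssdPhi u t * ENNReal.ofReal (max (-D t) 0)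
      ≤ ∫⁻ t in Set.Ioi 0, ssdPhi u t * ENNReal.ofReal (max (D t) 0) := by
  classical
  set ν : Measure ℝ := volume.restrict (Set.Ioi (0:ℝ)) with hν
  set dp : ℝ → ℝ := fun t => max (D t) 0 with hdp
  set dm : ℝ → ℝ := fun t => max (-D t) 0 with hdm
  have hdpm : Measurable dp := hDm.max measurable_const
  have hdmm : Measurable dm := hDm.neg.max measurable_const
  have hdpnn : ∀ t, 0 ≤ dp t := fun t => le_max_right _ _
  have hdmnn : ∀ t, 0 ≤ dm t := fun t => le_max_right _ _
  have hdpb : ∀ t, dp t ≤ 2 := fun t => max_le ((le_abs_self _).trans (hDb t)) (by norm_num)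
  have hdmb : ∀ t, dm t ≤ 2 := fun t => max_le ((neg_le_abs _).trans (hDb t)) (by norm_num)
  have hsub : ∀ t, dp t - dm t = D t := fun t => max_zero_sub_max_neg_zero_eq_self (D t)
  set φ : ℝ → ℝ := fun t => (ssdPhi u t).toReal with hφ
  have hφm : Measurable φ := (ssdPhi_meas huc).ennreal_toReal
  have hφnn : ∀ t, 0 ≤ φ t := fun t => ENNReal.toReal_nonneg
  have hφ_eq : ∀ t : ℝ, 0 < t → ENNReal.ofReal (φ t) = ssdPhi u t := by
    intro t ht
    rw [hφ]
    simp only [ssdPhi, if_pos ht]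
    rw [ENNReal.toReal_ofReal (ssd_aux_rd_nonneg hu huc ht)]
    -- goal: ofReal (ssdRD u t) = ofReal (ssdRD u t)
  have hφanti : ∀ a b : ℝ, 0 < a → a ≤ b → φ b ≤ φ a := by
    intro a b ha hab
    have hb : 0 < b := lt_of_lt_of_le ha hab
    rw [hφ]
    simp only [ssdPhi, if_pos ha, if_pos hb,
      ENNReal.toReal_ofReal (ssd_aux_rd_nonneg hu huc ha),
      ENNReal.toReal_ofReal (ssd_aux_rd_nonneg hu huc hb)]
    exact ssd_aux_rd_anti huc (Set.mem_Ioi.2 ha) (Set.mem_Ioi.2 hb) hab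
  -- rewrite both sides as integrals against withDensity measures
  have hwd : ∀ (g : ℝ → ℝ), Measurable g → (∀ t, 0 ≤ g t) →
      ∫⁻ t in Set.Ioi 0, ssdPhi u t * ENNReal.ofReal (g t)
        = ∫⁻ t in Set.Ioi 0, ν.withDensity (fun s => ENNReal.ofReal (g s)) {a | t < φ a} := by
    intro g hg hgnn
    have h1 : ∫⁻ t in Set.Ioi 0, ssdPhi u t * ENNReal.ofReal (g t)
        = ∫⁻ t, ssdPhi u t ∂(ν.withDensity fun s => ENNReal.ofReal (g s)) := by
      rw [lintegral_withDensity_eq_lintegral_mul ν hg.ennreal_ofReal (ssdPhi_meas huc)]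
      exact lintegral_congr fun t => (mul_comm _ _)
    have hnull : (ν.withDensity fun s => ENNReal.ofReal (g s)) (Set.Ioi 0)ᶜ = 0 := by
      rw [withDensity_apply _ measurableSet_Ioi.compl]
      apply setLIntegral_measure_zero
      rw [hν, Measure.restrict_apply measurableSet_Ioi.compl, Set.compl_inter_self]
      exact measure_empty
    have h2 : ∫⁻ t, ssdPhi u t ∂(ν.withDensity fun s => ENNReal.ofReal (g s))
        = ∫⁻ t, ENNReal.ofReal (φ t) ∂(ν.withDensity fun s => ENNReal.ofReal (g s)) := by
      apply lintegral_congr_ae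
      have : ∀ᵐ t ∂(ν.withDensity fun s => ENNReal.ofReal (g s)), t ∈ Set.Ioi 0 := by
        rw [ae_iff]
        have he : {t : ℝ | ¬ t ∈ Set.Ioi 0} = (Set.Ioi (0:ℝ))ᶜ := rfl
        rw [he]
        exact hnull
      filter_upwards [this] with t ht
      exact (hφ_eq t ht).symm
    rw [h1, h2, lintegral_eq_lintegral_meas_lt _ (Filter.Eventually.of_forall hφnn)
      hφm.aemeasurable]
  rw [hwd dm hdmm hdmnn, hwd dp hdpm hdpnn]
  -- pointwise comparison of the layer measures
  apply lintegral_mono_ae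
  rw [ae_restrict_iff' measurableSet_Ioi]
  apply Filter.Eventually.of_forall
  intro s hs
  have hs0 : (0:ℝ) < s := hs
  set E := {a : ℝ | s < φ a} with hE
  have hE_sub : E ⊆ Set.Ioi 0 := by
    intro a ha
    by_contra h
    have : ssdPhi u a = ⊤ := if_neg (fun h' => h (Set.mem_Ioi.2 h'))
    have : φ a = 0 := by rw [hφ]; simp only [this, ENNReal.toReal_top]
    rw [hE] at ha
    simp only [Set.mem_setOf_eq, this] at ha
    exact absurd (lt_trans hs0 ha) (lt_irrefl 0)
  have hE_dc : ∀ a b : ℝ, 0 < a → a ≤ b → b ∈ E → a ∈ E := by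
    intro a b ha hab hb
    exact lt_of_lt_of_le hb (hφanti a b ha hab)
  -- the measures of a set S ⊆ Ioi 0 with Ioc structure
  have hmeasIoc : ∀ (g : ℝ → ℝ), Measurable g → (∀ t, 0 ≤ g t) → (∀ t, g t ≤ 2) → ∀ c : ℝ,
      (ν.withDensity fun s => ENNReal.ofReal (g s)) (Set.Ioc 0 c)
        = ENNReal.ofReal (∫ t in Set.Ioc 0 c, g t) := by
    intro g hg hgnn hgb c
    rw [withDensity_apply _ measurableSet_Ioc, hν,
      Measure.restrict_restrict measurableSet_Ioc,
      Set.inter_eq_self_of_subset_left (fun t (ht : t ∈ Set.Ioc 0 c) => Set.mem_Ioi.2 ht.1)]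
    rw [ofReal_integral_eq_lintegral_ofReal]
    · apply Integrable.mono' (integrable_const 2) hg.aestronglyMeasurable
      exact Filter.Eventually.of_forall fun t => by
        rw [Real.norm_eq_abs, abs_of_nonneg (hgnn t)]; exact hgb t
    · exact Filter.Eventually.of_forall hgnn
  by_cases hEbd : BddAbove E
  · rcases E.eq_empty_or_nonempty with hE0 | hEne
    · rw [hE0]; simp
    · set c := sSup E with hc
      obtain ⟨a0, ha0⟩ := hEne
      have hc_pos : 0 < c := lt_of_lt_of_le (hE_sub ha0) (le_csSup hEbd ha0)
      have h1 : Set.Ioo 0 c ⊆ E := by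
        intro a ha
        obtain ⟨b, hb, hab⟩ := exists_lt_of_lt_csSup ⟨a0, ha0⟩ ha.2
        exact hE_dc a b ha.1 (le_of_lt hab) hb
      have h2 : E ⊆ Set.Ioc 0 c := fun a ha => ⟨hE_sub ha, le_csSup hEbd ha⟩
      have key : ∀ (g : ℝ → ℝ≥0∞), Measurable g →
          (ν.withDensity g) E = (ν.withDensity g) (Set.Ioc 0 c) := by
        intro g hg
        apply le_antisymm (measure_mono h2)
        calc (ν.withDensity g) (Set.Ioc 0 c)
            ≤ (ν.withDensity g) (Set.Ioo 0 c) + (ν.withDensity g) {c} := by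
              rw [← Set.Ioo_union_right hc_pos]
              exact measure_union_le _ _
          _ = (ν.withDensity g) (Set.Ioo 0 c) := by
              have : (ν.withDensity g) {c} = 0 := by
                rw [withDensity_apply _ (measurableSet_singleton c)]
                apply setLIntegral_measure_zero
                rw [hν, Measure.restrict_apply (measurableSet_singleton c)]
                exact measure_mono_null Set.inter_subset_left (measure_singleton c)
              rw [this, add_zero]
          _ ≤ (ν.withDensity g) E := measure_mono h1
      rw [key _ hdmm.ennreal_ofReal, key _ hdpm.ennreal_ofReal,
        hmeasIoc dm hdmm hdmnn hdmb c, hmeasIoc dp hdpm hdpnn hdpb c]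
      apply ENNReal.ofReal_le_ofReal
      have hip : IntegrableOn dp (Set.Ioc 0 c) volume := by
        apply Integrable.mono' (integrable_const 2) hdpm.aestronglyMeasurable
        exact Filter.Eventually.of_forall fun t => by
          rw [Real.norm_eq_abs, abs_of_nonneg (hdpnn t)]; exact hdpb t
      have him : IntegrableOn dm (Set.Ioc 0 c) volume := by
        apply Integrable.mono' (integrable_const 2) hdmm.aestronglyMeasurable
        exact Filter.Eventually.of_forall fun t => by
          rw [Real.norm_eq_abs, abs_of_nonneg (hdmnn t)]; exact hdmb t
      have hd : ∫ t in Set.Ioc 0 c, (dp t - dm t) = ∫ t in Set.Ioc 0 c, D t :=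
        integral_congr_ae (Filter.Eventually.of_forall fun t => hsub t)
      have hd2 : 0 ≤ ∫ t in Set.Ioc 0 c, D t := by
        rw [← integral_Icc_eq_integral_Ioc]
        exact hssd c (le_of_lt hc_pos)
      rw [integral_sub hip him] at hd
      linarith
  · have hEeq : E = Set.Ioi 0 := by
      apply Set.Subset.antisymm hE_sub
      intro a ha
      obtain ⟨b, hb, hab⟩ := not_bddAbove_iff.1 hEbd a
      exact hE_dc a b ha (le_of_lt hab) hb
    have hmeasIoi : ∀ (g : ℝ → ℝ), Measurable g → (∀ t, 0 ≤ g t) →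
        IntegrableOn g (Set.Ioi 0) volume →
        (ν.withDensity fun s => ENNReal.ofReal (g s)) (Set.Ioi 0)
          = ENNReal.ofReal (∫ t in Set.Ioi 0, g t) := by
      intro g hg hgnn hgi
      rw [withDensity_apply _ measurableSet_Ioi, hν,
        Measure.restrict_restrict measurableSet_Ioi, Set.inter_self]
      rw [ofReal_integral_eq_lintegral_ofReal hgi (Filter.Eventually.of_forall hgnn)]
    have hip : IntegrableOn dp (Set.Ioi 0) volume := by
      apply Integrable.mono' hint.abs hdpm.aestronglyMeasurable
      exact Filter.Eventually.of_forall fun t => by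
        rw [Real.norm_eq_abs, abs_of_nonneg (hdpnn t)]
        exact max_le (le_abs_self _) (abs_nonneg _)
    have him : IntegrableOn dm (Set.Ioi 0) volume := by
      apply Integrable.mono' hint.abs hdmm.aestronglyMeasurable
      exact Filter.Eventually.of_forall fun t => by
        rw [Real.norm_eq_abs, abs_of_nonneg (hdmnn t)]
        exact max_le (neg_le_abs _) (abs_nonneg _)
    rw [hEeq, hmeasIoi dm hdmm hdmnn him, hmeasIoi dp hdpm hdpnn hip]
    apply ENNReal.ofReal_le_ofReal
    have hd : ∫ t in Set.Ioi 0, (dp t - dm t) = ∫ t in Set.Ioi 0, D t :=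
      integral_congr_ae (Filter.Eventually.of_forall fun t => hsub t)
    rw [integral_sub hip him] at hd
    have hd2 : 0 ≤ ∫ t in Set.Ioi 0, D t := by
      have hsm : ∀ n : ℕ, MeasurableSet (Set.Ioc (0:ℝ) (n:ℝ)) := fun n => measurableSet_Ioc
      have hmono : Monotone (fun n : ℕ => Set.Ioc (0:ℝ) (n:ℝ)) := fun n m hnm =>
        Set.Ioc_subset_Ioc_right (Nat.cast_le.2 hnm)
      have hUn : ⋃ n : ℕ, Set.Ioc (0:ℝ) (n:ℝ) = Set.Ioi 0 := by
        apply Set.Subset.antisymm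
        · exact Set.iUnion_subset fun n t ht => Set.mem_Ioi.2 ht.1
        · intro t ht
          obtain ⟨n, hn⟩ := exists_nat_gt t
          exact Set.mem_iUnion.2 ⟨n, Set.mem_Ioi.1 ht, le_of_lt hn⟩
      have htend := tendsto_setIntegral_of_monotone hsm hmono (hUn ▸ hint)
      rw [hUn] at htend
      apply ge_of_tendsto htend
      apply Filter.Eventually.of_forall
      intro n
      rw [← integral_Icc_eq_integral_Ioc]
      exact hssd n (Nat.cast_nonneg n)
    linarith

lemma ssd_aux_tail {Ω : Type*} [MeasurableSpace Ω] (P : Measure Ω) [IsProbabilityMeasure P]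
    {Z : Ω → ℝ} (hZ : Measurable Z) (hZnn : ∀ ω, 0 ≤ Z ω) (hZi : Integrable Z P) :
    ∫⁻ t in Set.Ioi (0:ℝ), P {ω | t < Z ω} ≠ ⊤ := by
  rw [← lintegral_eq_lintegral_meas_lt P (Filter.Eventually.of_forall hZnn) hZ.aemeasurable]
  have h1 : ∀ ω, ENNReal.ofReal (Z ω) = ‖Z ω‖ₑ := fun ω => by
    rw [← ofReal_norm, Real.norm_eq_abs, abs_of_nonneg (hZnn ω)]
  rw [lintegral_congr h1]
  exact hZi.2.ne

lemma ssd_aux_F0 {Ω : Type*} [MeasurableSpace Ω] (P : Measure Ω) [IsProbabilityMeasure P]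
    (X Y : Ω → ℝ) (hX : Measurable X) (hY : Measurable Y)
    (hssd : ∀ x : ℝ, 0 ≤ x →
      0 ≤ ∫ t in Set.Icc 0 x, ((P {ω | Y ω ≤ t}).toReal - (P {ω | X ω ≤ t}).toReal)) :
    (P {ω | X ω ≤ 0}).toReal ≤ (P {ω | Y ω ≤ 0}).toReal := by
  set FX : ℝ → ℝ := fun t => (P {ω | X ω ≤ t}).toReal with hFX
  set FY : ℝ → ℝ := fun t => (P {ω | Y ω ≤ t}).toReal with hFY
  have hFXm : Monotone FX := fun a b hab => ENNReal.toReal_mono (measure_ne_top P _)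
    (measure_mono (fun ω h => le_trans h hab))
  have hFYm : Monotone FY := fun a b hab => ENNReal.toReal_mono (measure_ne_top P _)
    (measure_mono (fun ω h => le_trans h hab))
  have hFb : ∀ t, 0 ≤ FX t ∧ FX t ≤ 1 ∧ 0 ≤ FY t ∧ FY t ≤ 1 := by
    intro t
    refine ⟨ENNReal.toReal_nonneg, ?_, ENNReal.toReal_nonneg, ?_⟩ <;>
      · apply ENNReal.toReal_le_of_le_ofReal one_pos.le
        simpa using prob_le_one
  by_contra hlt
  push_neg at hlt
  set δ := FX 0 - FY 0 with hδ
  have hδ0 : 0 < δ := sub_pos.2 hlt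
  -- right continuity of FY at 0
  have hrc : Filter.Tendsto (fun n : ℕ => P {ω | Y ω ≤ 1/((n:ℝ)+1)}) Filter.atTop
      (𝓝 (P {ω | Y ω ≤ 0})) := by
    have h1 := tendsto_measure_iInter_atTop (μ := P)
      (s := fun m : ℕ => {ω | Y ω ≤ 1/((m:ℝ)+1)})
      (fun n => (hY measurableSet_Iic).nullMeasurableSet)
      (fun n m hnm ω hω => by
        refine le_trans (show Y ω ≤ 1/((m:ℝ)+1) from hω) ?_
        apply one_div_le_one_div_of_le (by positivity)
        have : (n:ℝ) ≤ m := Nat.cast_le.2 hnm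
        linarith)
      ⟨0, measure_ne_top P _⟩
    have h2 : (⋂ n : ℕ, {ω | Y ω ≤ 1/((n:ℝ)+1)}) = {ω | Y ω ≤ 0} := by
      apply Set.Subset.antisymm
      · intro ω hω
        simp only [Set.mem_iInter, Set.mem_setOf_eq] at hω
        by_contra h
        have hY0 : 0 < Y ω := lt_of_not_ge (by simpa using h)
        obtain ⟨n, hn⟩ := exists_nat_gt (1 / Y ω)
        have : 1/((n:ℝ)+1) < Y ω := by
          rw [div_lt_iff₀ (by positivity)]
          rw [div_lt_iff₀ hY0] at hn
          nlinarith
        exact absurd (hω n) (not_le.2 this)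
      · intro ω hω
        apply Set.mem_iInter.2
        intro n
        exact le_trans (show Y ω ≤ 0 from hω)
          (le_of_lt (by positivity : (0:ℝ) < 1/((n:ℝ)+1)))
    rw [h2] at h1
    exact h1
  have hrc2 : Filter.Tendsto (fun n : ℕ => FY (1/((n:ℝ)+1))) Filter.atTop (𝓝 (FY 0)) :=
    (ENNReal.tendsto_toReal (measure_ne_top P _)).comp hrc
  have hev : ∀ᶠ n : ℕ in Filter.atTop, FY (1/((n:ℝ)+1)) < FY 0 + δ/2 :=
    hrc2.eventually_lt_const (by linarith)
  obtain ⟨n, hn⟩ := hev.exists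
  set c : ℝ := 1/((n:ℝ)+1) with hc
  have hc0 : 0 < c := by positivity
  have hptwise : ∀ t ∈ Set.Icc 0 c, FY t - FX t ≤ -(δ/2) := by
    intro t ht
    have h1 : FY t ≤ FY c := hFYm ht.2
    have h2 : FX 0 ≤ FX t := hFXm ht.1
    have : FY c < FY 0 + δ/2 := hn
    rw [hδ] at *
    linarith
  have hIm : Measurable fun t => FY t - FX t := (hFYm.measurable).sub (hFXm.measurable)
  have hIi : IntegrableOn (fun t => FY t - FX t) (Set.Icc 0 c) volume := by
    apply Integrable.mono' (integrable_const 2) hIm.aestronglyMeasurable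
    apply Filter.Eventually.of_forall
    intro t
    rw [Real.norm_eq_abs, abs_le]
    obtain ⟨h1, h2, h3, h4⟩ := hFb t
    constructor <;> linarith
  have hint2 : ∫ t in Set.Icc 0 c, (FY t - FX t) ≤ ∫ t in Set.Icc (0:ℝ) c, (-(δ/2)) :=
    setIntegral_mono_on hIi (integrable_const _) measurableSet_Icc hptwise
  rw [setIntegral_const] at hint2
  have hvol : volume.real (Set.Icc (0:ℝ) c) = c := by
    rw [measureReal_def, Real.volume_Icc, ENNReal.toReal_ofReal (by linarith)]
    ring
  rw [hvol] at hint2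
  have h0 := hssd c (le_of_lt hc0)
  have : (0:ℝ) < c * (δ/2) := by positivity
  rw [smul_eq_mul] at hint2
  -- 0 ≤ ∫ ≤ c * (-(δ/2)) < 0
  nlinarith [h0, hint2]

/-- The one-dimensional comparison: SSD implies expected-utility domination. -/
lemma ssd_aux_oneDim {Ω : Type*} [MeasurableSpace Ω] (P : Measure Ω) [IsProbabilityMeasure P]
    (X Y : Ω → ℝ) (hX : Measurable X) (hY : Measurable Y)
    (hXnn : ∀ ω, 0 ≤ X ω) (hYnn : ∀ ω, 0 ≤ Y ω)
    (hXi : Integrable X P) (hYi : Integrable Y P)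
    (hssd : ∀ x : ℝ, 0 ≤ x →
      0 ≤ ∫ t in Set.Icc 0 x, ((P {ω | Y ω ≤ t}).toReal - (P {ω | X ω ≤ t}).toReal))
    (hu : Monotone u) (huc : ConcaveOn ℝ (Set.Ici 0) u) :
    ∫ ω, u (Y ω) ∂P ≤ ∫ ω, u (X ω) ∂P := by
  classical
  set L := ssdL u with hL
  set FX : ℝ → ℝ := fun t => (P {ω | X ω ≤ t}).toReal with hFXdef
  set FY : ℝ → ℝ := fun t => (P {ω | Y ω ≤ t}).toReal with hFYdef
  have hFXm : Monotone FX := fun a b hab => ENNReal.toReal_mono (measure_ne_top P _)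
    (measure_mono (fun ω h => le_trans h hab))
  have hFYm : Monotone FY := fun a b hab => ENNReal.toReal_mono (measure_ne_top P _)
    (measure_mono (fun ω h => le_trans h hab))
  have hFb : ∀ t, 0 ≤ FX t ∧ FX t ≤ 1 ∧ 0 ≤ FY t ∧ FY t ≤ 1 := by
    intro t
    refine ⟨ENNReal.toReal_nonneg, ?_, ENNReal.toReal_nonneg, ?_⟩ <;>
      · apply ENNReal.toReal_le_of_le_ofReal one_pos.le
        simpa using prob_le_one
  set D : ℝ → ℝ := fun t => FY t - FX t with hDdef
  have hDm : Measurable D := hFYm.measurable.sub hFXm.measurable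
  have hDb : ∀ t, |D t| ≤ 2 := by
    intro t
    obtain ⟨h1, h2, h3, h4⟩ := hFb t
    rw [abs_le]
    constructor <;> simp only [hDdef] <;> linarith
  -- tail identities
  have hHX : ∀ t : ℝ, P {ω | t < X ω} = ENNReal.ofReal (1 - FX t) := by
    intro t
    have hcompl : {ω | t < X ω} = {ω | X ω ≤ t}ᶜ := by
      ext ω; simp [not_le]
    have hms : MeasurableSet {ω | X ω ≤ t} := hX measurableSet_Iic
    rw [hcompl, prob_compl_eq_one_sub hms,
      ENNReal.ofReal_sub _ ENNReal.toReal_nonneg, ENNReal.ofReal_one,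
      ENNReal.ofReal_toReal (measure_ne_top P _)]
  have hHY : ∀ t : ℝ, P {ω | t < Y ω} = ENNReal.ofReal (1 - FY t) := by
    intro t
    have hcompl : {ω | t < Y ω} = {ω | Y ω ≤ t}ᶜ := by
      ext ω; simp [not_le]
    have hms : MeasurableSet {ω | Y ω ≤ t} := hY measurableSet_Iic
    rw [hcompl, prob_compl_eq_one_sub hms,
      ENNReal.ofReal_sub _ ENNReal.toReal_nonneg, ENNReal.ofReal_one,
      ENNReal.ofReal_toReal (measure_ne_top P _)]
  -- integrability of D on Ioi 0
  have hDint : IntegrableOn D (Set.Ioi 0) volume := by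
    refine ⟨hDm.aestronglyMeasurable, ?_⟩
    rw [hasFiniteIntegral_iff_norm]
    have hb : ∀ t : ℝ, ENNReal.ofReal ‖D t‖
        ≤ ENNReal.ofReal (1 - FX t) + ENNReal.ofReal (1 - FY t) := by
      intro t
      rw [← ENNReal.ofReal_add (by obtain ⟨_,h2,_,_⟩ := hFb t; linarith)
        (by obtain ⟨_,_,_,h4⟩ := hFb t; linarith)]
      apply ENNReal.ofReal_le_ofReal
      obtain ⟨h1, h2, h3, h4⟩ := hFb t
      rw [Real.norm_eq_abs, abs_le']
      constructor <;> simp only [hDdef] <;> linarith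
    calc ∫⁻ t in Set.Ioi 0, ENNReal.ofReal ‖D t‖
        ≤ ∫⁻ t in Set.Ioi 0, (ENNReal.ofReal (1 - FX t) + ENNReal.ofReal (1 - FY t)) :=
          lintegral_mono fun t => hb t
      _ = (∫⁻ t in Set.Ioi 0, ENNReal.ofReal (1 - FX t))
            + ∫⁻ t in Set.Ioi 0, ENNReal.ofReal (1 - FY t) :=
          lintegral_add_left ((measurable_const.sub hFXm.measurable).ennreal_ofReal) _
      _ < ⊤ := by
          rw [ENNReal.add_lt_top]
          constructor
          · rw [lintegral_congr (fun t => (hHX t).symm)]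
            exact lt_top_iff_ne_top.2 (ssd_aux_tail P hX hXnn hXi)
          · rw [lintegral_congr (fun t => (hHY t).symm)]
            exact lt_top_iff_ne_top.2 (ssd_aux_tail P hY hYnn hYi)
  -- the core inequality
  have hcore := ssd_aux_core hu huc hDm hDb hDint hssd
  -- measurability helpers
  have hmHX : Measurable fun t => ENNReal.ofReal (1 - FX t) :=
    (measurable_const.sub hFXm.measurable).ennreal_ofReal
  have hmHY : Measurable fun t => ENNReal.ofReal (1 - FY t) :=
    (measurable_const.sub hFYm.measurable).ennreal_ofReal
  have hmdp : Measurable fun t => ENNReal.ofReal (max (D t) 0) :=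
    (hDm.max measurable_const).ennreal_ofReal
  have hmdm : Measurable fun t => ENNReal.ofReal (max (-D t) 0) :=
    (hDm.neg.max measurable_const).ennreal_ofReal
  -- representations
  have hreprX := ssd_aux_repr P hu huc hX hXnn hXi
  have hreprY := ssd_aux_repr P hu huc hY hYnn hYi
  have hreprX2 : ENNReal.ofReal ((∫ ω, max (u (X ω)) L ∂P) - L)
      = ∫⁻ t in Set.Ioi 0, ssdPhi u t * ENNReal.ofReal (1 - FX t) := by
    rw [hreprX]
    exact lintegral_congr fun t => by rw [hHX t]
  have hreprY2 : ENNReal.ofReal ((∫ ω, max (u (Y ω)) L ∂P) - L)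
      = ∫⁻ t in Set.Ioi 0, ssdPhi u t * ENNReal.ofReal (1 - FY t) := by
    rw [hreprY]
    exact lintegral_congr fun t => by rw [hHY t]
  set AX := ∫⁻ t in Set.Ioi (0:ℝ), ssdPhi u t * ENNReal.ofReal (1 - FX t) with hAX
  set AY := ∫⁻ t in Set.Ioi (0:ℝ), ssdPhi u t * ENNReal.ofReal (1 - FY t) with hAY
  set Bp := ∫⁻ t in Set.Ioi (0:ℝ), ssdPhi u t * ENNReal.ofReal (max (D t) 0) with hBp
  set Bm := ∫⁻ t in Set.Ioi (0:ℝ), ssdPhi u t * ENNReal.ofReal (max (-D t) 0) with hBm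
  have hAXfin : AX ≠ ⊤ := by rw [← hreprX2]; exact ENNReal.ofReal_ne_top
  have hAYfin : AY ≠ ⊤ := by rw [← hreprY2]; exact ENNReal.ofReal_ne_top
  -- pointwise sum identity
  have hkey : ∀ t : ℝ, ENNReal.ofReal (1 - FX t) + ENNReal.ofReal (max (-D t) 0)
      = ENNReal.ofReal (1 - FY t) + ENNReal.ofReal (max (D t) 0) := by
    intro t
    obtain ⟨h1, h2, h3, h4⟩ := hFb t
    rw [← ENNReal.ofReal_add (by linarith) (le_max_right _ _),
      ← ENNReal.ofReal_add (by linarith) (le_max_right _ _)]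
    congr 1
    have := max_zero_sub_max_neg_zero_eq_self (D t)
    simp only [hDdef] at *
    rcases le_total (FY t - FX t) 0 with h | h
    · rw [max_eq_right h, max_eq_left (by linarith : 0 ≤ -(FY t - FX t))]
      ring
    · rw [max_eq_left h, max_eq_right (by linarith : -(FY t - FX t) ≤ 0)]
      ring
  have hsum : AX + Bm = AY + Bp := by
    rw [hAX, hBm, hAY, hBp, ← lintegral_add_left (f := fun t => ssdPhi u t * ENNReal.ofReal (1 - FX t)) ((ssdPhi_meas huc).mul hmHX),
      ← lintegral_add_left (f := fun t => ssdPhi u t * ENNReal.ofReal (1 - FY t)) ((ssdPhi_meas huc).mul hmHY)]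
    apply lintegral_congr
    intro t
    rw [← mul_add, ← mul_add, hkey t]
  have hBmfin : Bm ≠ ⊤ := by
    have hle : Bm ≤ AY := by
      apply lintegral_mono
      intro t
      apply mul_le_mul_right
      apply ENNReal.ofReal_le_ofReal
      obtain ⟨h1, h2, h3, h4⟩ := hFb t
      apply max_le _ (by linarith)
      simp only [hDdef]; linarith
    exact ne_top_of_le_ne_top hAYfin hle
  -- conclude AY ≤ AX
  have hmain : AY ≤ AX := by
    have h1 : AY + Bm ≤ AY + Bp := add_le_add le_rfl hcore
    rw [← hsum] at h1
    exact (ENNReal.add_le_add_iff_right hBmfin).1 h1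
  -- translate back to real integrals
  have hvXint := ssd_aux_vint hu huc hX hXnn hXi
  have hvYint := ssd_aux_vint hu huc hY hYnn hYi
  have hEvX_ge : L ≤ ∫ ω, max (u (X ω)) L ∂P := by
    calc L = ∫ _ω, L ∂P := by rw [integral_const]; simp
      _ ≤ ∫ ω, max (u (X ω)) L ∂P :=
          integral_mono (integrable_const L) hvXint fun ω => le_max_right _ _
  have hEv : ∫ ω, max (u (Y ω)) L ∂P ≤ ∫ ω, max (u (X ω)) L ∂P := by
    have := hmain
    rw [← hreprX2, ← hreprY2] at this
    have h2 := (ENNReal.ofReal_le_ofReal_iff (by linarith)).1 this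
    linarith
  -- remove the jump at 0
  have hjump : ∀ (Z : Ω → ℝ), Measurable Z → (∀ ω, 0 ≤ Z ω) → Integrable Z P →
      ∫ ω, u (Z ω) ∂P = (∫ ω, max (u (Z ω)) L ∂P) - (L - u 0) * (P {ω | Z ω ≤ 0}).toReal := by
    intro Z hZ hZnn hZi
    have hpt : ∀ ω, u (Z ω) = max (u (Z ω)) L
        - ({ω' | Z ω' ≤ 0}).indicator (fun _ => L - u 0) ω := by
      intro ω
      rcases eq_or_lt_of_le (hZnn ω) with h0 | h0
      · have hz : Z ω ≤ 0 := le_of_eq h0.symm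
        have hmem : ω ∈ {ω' | Z ω' ≤ 0} := hz
        rw [Set.indicator_of_mem hmem, ← h0, max_eq_right (ssdL_ge hu)]
        ring
      · have hmem : ω ∉ {ω' | Z ω' ≤ 0} := by
          simp only [Set.mem_setOf_eq, not_le]
          exact h0
        rw [Set.indicator_of_notMem hmem, max_eq_left (ssdL_le hu h0)]
        ring
    have hms0 : MeasurableSet {ω' | Z ω' ≤ 0} := hZ measurableSet_Iic
    rw [integral_congr_ae (Filter.Eventually.of_forall hpt),
      integral_sub (ssd_aux_vint hu huc hZ hZnn hZi)
        ((integrable_const (L - u 0)).indicator hms0),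
      integral_indicator_const _ hms0]
    rw [smul_eq_mul, mul_comm, measureReal_def]
  have hF0 := ssd_aux_F0 P X Y hX hY hssd
  have hj : 0 ≤ L - u 0 := sub_nonneg.2 (ssdL_ge hu)
  rw [hjump X hX hXnn hXi, hjump Y hY hYnn hYi]
  have hmul : (L - u 0) * (P {ω | X ω ≤ 0}).toReal ≤ (L - u 0) * (P {ω | Y ω ≤ 0}).toReal :=
    mul_le_mul_of_nonneg_left hF0 hj
  linarith

lemma ssd_aux_concave_comp_mul (huc : ConcaveOn ℝ (Set.Ici 0) u) {b : ℝ} (hb : 0 ≤ b) :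
    ConcaveOn ℝ (Set.Ici 0) (fun t => u (b * t)) := by
  refine ⟨convex_Ici 0, fun x hx y hy a c ha hc hac => ?_⟩
  have hx' : (0:ℝ) ≤ x := hx
  have hy' : (0:ℝ) ≤ y := hy
  have h1 : b * (a • x + c • y) = a • (b * x) + c • (b * y) := by
    simp only [smul_eq_mul]; ring
  show a • u (b * x) + c • u (b * y) ≤ u (b * (a • x + c • y))
  rw [h1]
  exact huc.2 (mul_nonneg hb hx' : b * x ∈ Set.Ici 0) (mul_nonneg hb hy') ha hc hac

lemma ssd_aux_integrable_prod {Ω : Type*} [MeasurableSpace Ω] {P : Measure Ω}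
    [IsProbabilityMeasure P] {n : ℕ} {X : Fin n → Ω → ℝ}
    (hX : ∀ i, Measurable (X i)) (hXi : ∀ i, Integrable (X i) P)
    (hXindep : iIndepFun X P) (s : Finset (Fin n)) :
    Integrable (fun ω => ∏ i ∈ s, X i ω) P := by
  classical
  induction s using Finset.induction_on with
  | empty => simp only [Finset.prod_empty]; exact integrable_const 1
  | @insert i s hi ih =>
    have hfe : (∏ j ∈ s, X j) = (fun ω => ∏ j ∈ s, X j ω) :=
      funext fun ω => Finset.prod_apply ω s X
    have hind : IndepFun (X i) (∏ j ∈ s, X j) P :=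
      (hXindep.indepFun_finsetProd_of_notMem hX hi).symm
    have hint : Integrable (X i * ∏ j ∈ s, X j) P := by
      apply hind.integrable_mul (hXi i)
      rw [hfe]; exact ih
    apply hint.congr
    apply Filter.Eventually.of_forall
    intro ω
    show (X i * ∏ j ∈ s, X j) ω = ∏ j ∈ insert i s, X j ω
    rw [Finset.prod_insert hi, Pi.mul_apply, Finset.prod_apply]

lemma ssd_aux_key {Ω : Type*} [MeasurableSpace Ω] (P : Measure Ω) [IsProbabilityMeasure P]
    (n : ℕ) (X Y : Fin n → Ω → ℝ)
    (hX : ∀ i, Measurable (X i)) (hY : ∀ i, Measurable (Y i))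
    (hXnn : ∀ i ω, 0 ≤ X i ω) (hYnn : ∀ i ω, 0 ≤ Y i ω)
    (hXi : ∀ i, Integrable (X i) P) (hYi : ∀ i, Integrable (Y i) P)
    (hXindep : iIndepFun X P)
    (hYindep : iIndepFun Y P)
    (hssd : ∀ i, ∀ x : ℝ, 0 ≤ x →
      0 ≤ ∫ t in Set.Icc 0 x,
        ((P {ω | Y i ω ≤ t}).toReal - (P {ω | X i ω ≤ t}).toReal))
    (s : Finset (Fin n)) :
    ∀ u : ℝ → ℝ, Monotone u → ConcaveOn ℝ (Set.Ici 0) u →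
      ∫ ω, u (∏ i ∈ s, Y i ω) ∂P ≤ ∫ ω, u (∏ i ∈ s, X i ω) ∂P := by
  classical
  induction s using Finset.induction_on with
  | empty => intro u hu huc; simp
  | @insert i s hi ih =>
    intro u hu huc
    have hum : Measurable u := hu.measurable
    set A : Ω → ℝ := fun ω => ∏ j ∈ s, X j ω with hA
    set B : Ω → ℝ := fun ω => ∏ j ∈ s, Y j ω with hB
    have hAm : Measurable A := Finset.measurable_prod s fun j _ => hX j
    have hBm : Measurable B := Finset.measurable_prod s fun j _ => hY j
    have hAnn : ∀ ω, 0 ≤ A ω := fun ω => Finset.prod_nonneg fun j _ => hXnn j ω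
    have hBnn : ∀ ω, 0 ≤ B ω := fun ω => Finset.prod_nonneg fun j _ => hYnn j ω
    have hAi : Integrable A P := ssd_aux_integrable_prod hX hXi hXindep s
    have hBi : Integrable B P := ssd_aux_integrable_prod hY hYi hYindep s
    -- independence of the pairs
    have hfeX : (∏ j ∈ s, X j) = A := funext fun ω => Finset.prod_apply ω s X
    have hfeY : (∏ j ∈ s, Y j) = B := funext fun ω => Finset.prod_apply ω s Y
    have hindX : IndepFun (X i) A P := by
      rw [← hfeX]; exact (hXindep.indepFun_finsetProd_of_notMem hX hi).symm
    have hindY : IndepFun (Y i) B P := by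
      rw [← hfeY]; exact (hYindep.indepFun_finsetProd_of_notMem hY hi).symm
    -- laws
    set μB : Measure ℝ := P.map (X i) with hμB
    set νB : Measure ℝ := P.map (Y i) with hνB
    set μA : Measure ℝ := P.map A with hμA
    set νA : Measure ℝ := P.map B with hνA
    haveI : IsProbabilityMeasure μB := Measure.isProbabilityMeasure_map (hX i).aemeasurable
    haveI : IsProbabilityMeasure νB := Measure.isProbabilityMeasure_map (hY i).aemeasurable
    haveI : IsProbabilityMeasure μA := Measure.isProbabilityMeasure_map hAm.aemeasurable
    haveI : IsProbabilityMeasure νA := Measure.isProbabilityMeasure_map hBm.aemeasurable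
    have hmapX : P.map (fun ω => (X i ω, A ω)) = μB.prod μA :=
      (indepFun_iff_map_prod_eq_prod_map_map (hX i).aemeasurable hAm.aemeasurable).1 hindX
    have hmapY : P.map (fun ω => (Y i ω, B ω)) = νB.prod νA :=
      (indepFun_iff_map_prod_eq_prod_map_map (hY i).aemeasurable hBm.aemeasurable).1 hindY
    have hmeasp : ∀ (ρ : Measure (ℝ × ℝ)),
        AEStronglyMeasurable (fun p : ℝ × ℝ => u (p.1 * p.2)) ρ := fun ρ =>
      (hum.comp (measurable_fst.mul measurable_snd)).aestronglyMeasurable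
    -- nonnegativity and integrability under laws
    have hae_nn : ∀ (Z : Ω → ℝ), Measurable Z → (∀ ω, 0 ≤ Z ω) →
        (∀ᵐ x ∂(P.map Z), 0 ≤ x) := by
      intro Z hZ hZnn
      rw [ae_map_iff hZ.aemeasurable measurableSet_Ici]
      exact Filter.Eventually.of_forall hZnn
    have hid_int : ∀ (Z : Ω → ℝ), Measurable Z → Integrable Z P →
        Integrable (fun x => x) (P.map Z) := by
      intro Z hZ hZi
      exact (integrable_map_measure aestronglyMeasurable_id hZ.aemeasurable).2 hZi
    -- integrability of u(p.1*p.2) on product of laws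
    have hprodint : ∀ (μ ν : Measure ℝ), IsProbabilityMeasure μ → IsProbabilityMeasure ν →
        (∀ᵐ b ∂μ, 0 ≤ b) → (∀ᵐ a ∂ν, 0 ≤ a) →
        Integrable (fun x => x) μ → Integrable (fun x => x) ν →
        Integrable (fun p : ℝ × ℝ => u (p.1 * p.2)) (μ.prod ν) := by
      intro μ ν hμ hν hμnn hνnn hμi hνi
      have hgint : Integrable
          (fun p : ℝ × ℝ => |u 0| + |u 2| + (u 2 - u 1) * (p.1 * p.2)) (μ.prod ν) :=
        (integrable_const _).add ((hμi.mul_prod hνi).const_mul (u 2 - u 1))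
      apply Integrable.mono' hgint (hmeasp _)
      have h1 : ∀ᵐ p : ℝ × ℝ ∂(μ.prod ν), 0 ≤ p.1 := by
        rw [ae_iff]
        have he : {p : ℝ × ℝ | ¬ 0 ≤ p.1} = {x : ℝ | ¬ 0 ≤ x} ×ˢ (Set.univ : Set ℝ) := by
          ext p; simp
        rw [he, Measure.prod_prod, ae_iff.1 hμnn, zero_mul]
      have h2 : ∀ᵐ p : ℝ × ℝ ∂(μ.prod ν), 0 ≤ p.2 := by
        rw [ae_iff]
        have he : {p : ℝ × ℝ | ¬ 0 ≤ p.2} = (Set.univ : Set ℝ) ×ˢ {x : ℝ | ¬ 0 ≤ x} := by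
          ext p; simp
        rw [he, Measure.prod_prod, ae_iff.1 hνnn, mul_zero]
      filter_upwards [h1, h2] with p hp1 hp2
      have hnn : (0:ℝ) ≤ p.1 * p.2 := mul_nonneg hp1 hp2
      have hK : 0 ≤ u 2 - u 1 := sub_nonneg.2 (hu one_le_two)
      have hub := ssd_aux_ubound hu huc hnn
      have hlb : u 0 ≤ u (p.1 * p.2) := hu hnn
      rw [Real.norm_eq_abs, abs_le]
      constructor
      · nlinarith [abs_nonneg (u 2), neg_abs_le (u 0), mul_nonneg hK hnn]
      · nlinarith [abs_nonneg (u 0), le_abs_self (u 2)]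
    have hintXA := hprodint μB μA inferInstance inferInstance
      (hae_nn _ (hX i) (hXnn i)) (hae_nn _ hAm hAnn)
      (hid_int _ (hX i) (hXi i)) (hid_int _ hAm hAi)
    have hintXB := hprodint μB νA inferInstance inferInstance
      (hae_nn _ (hX i) (hXnn i)) (hae_nn _ hBm hBnn)
      (hid_int _ (hX i) (hXi i)) (hid_int _ hBm hBi)
    have hintYB := hprodint νB νA inferInstance inferInstance
      (hae_nn _ (hY i) (hYnn i)) (hae_nn _ hBm hBnn)
      (hid_int _ (hY i) (hYi i)) (hid_int _ hBm hBi)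
    -- translate the two sides
    have hstepX : ∫ ω, u (∏ j ∈ insert i s, X j ω) ∂P
        = ∫ p : ℝ × ℝ, u (p.1 * p.2) ∂(μB.prod μA) := by
      have e : ∀ ω, u (∏ j ∈ insert i s, X j ω) = u (X i ω * A ω) := fun ω => by
        rw [Finset.prod_insert hi]
      rw [integral_congr_ae (Filter.Eventually.of_forall e), ← hmapX,
        integral_map ((hX i).prodMk hAm).aemeasurable (hmeasp _)]
    have hstepY : ∫ ω, u (∏ j ∈ insert i s, Y j ω) ∂P
        = ∫ p : ℝ × ℝ, u (p.1 * p.2) ∂(νB.prod νA) := by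
      have e : ∀ ω, u (∏ j ∈ insert i s, Y j ω) = u (Y i ω * B ω) := fun ω => by
        rw [Finset.prod_insert hi]
      rw [integral_congr_ae (Filter.Eventually.of_forall e), ← hmapY,
        integral_map ((hY i).prodMk hBm).aemeasurable (hmeasp _)]
    -- middle term and the two inequalities
    have hineq1 : ∫ p : ℝ × ℝ, u (p.1 * p.2) ∂(μB.prod νA)
        ≤ ∫ p : ℝ × ℝ, u (p.1 * p.2) ∂(μB.prod μA) := by
      rw [integral_prod _ hintXA, integral_prod _ hintXB]
      apply integral_mono_ae hintXB.integral_prod_left hintXA.integral_prod_left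
      filter_upwards [hae_nn _ (hX i) (hXnn i)] with b hb
      have hmono_b : Monotone fun t => u (b * t) := fun x y hxy =>
        hu (mul_le_mul_of_nonneg_left hxy hb)
      have hconc_b := ssd_aux_concave_comp_mul huc hb
      have hmb : AEStronglyMeasurable (fun a => u (b * a)) (P.map A) :=
        (hum.comp (measurable_const_mul b)).aestronglyMeasurable
      have hmb' : AEStronglyMeasurable (fun a => u (b * a)) (P.map B) :=
        (hum.comp (measurable_const_mul b)).aestronglyMeasurable
      calc ∫ a, u (b * a) ∂νA = ∫ ω, u (b * B ω) ∂P := integral_map hBm.aemeasurable hmb'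
        _ ≤ ∫ ω, u (b * A ω) ∂P := ih (fun t => u (b * t)) hmono_b hconc_b
        _ = ∫ a, u (b * a) ∂μA := (integral_map hAm.aemeasurable hmb).symm
    have hineq2 : ∫ p : ℝ × ℝ, u (p.1 * p.2) ∂(νB.prod νA)
        ≤ ∫ p : ℝ × ℝ, u (p.1 * p.2) ∂(μB.prod νA) := by
      rw [integral_prod_symm _ hintXB, integral_prod_symm _ hintYB]
      apply integral_mono_ae hintYB.integral_prod_right hintXB.integral_prod_right
      filter_upwards [hae_nn _ hBm hBnn] with a ha
      have hmono_a : Monotone fun t => u (t * a) := fun x y hxy =>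
        hu (mul_le_mul_of_nonneg_right hxy ha)
      have hconc_a : ConcaveOn ℝ (Set.Ici 0) fun t => u (t * a) := by
        have h := ssd_aux_concave_comp_mul huc ha
        have he : (fun t => u (a * t)) = fun t => u (t * a) := funext fun t => by rw [mul_comm]
        rwa [he] at h
      have hma : AEStronglyMeasurable (fun b => u (b * a)) μB :=
        (hum.comp (measurable_mul_const a)).aestronglyMeasurable
      have hma' : AEStronglyMeasurable (fun b => u (b * a)) νB :=
        (hum.comp (measurable_mul_const a)).aestronglyMeasurable
      calc ∫ b, u (b * a) ∂νB = ∫ ω, u (Y i ω * a) ∂P :=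
            integral_map (hY i).aemeasurable hma'
        _ ≤ ∫ ω, u (X i ω * a) ∂P :=
            ssd_aux_oneDim P (X i) (Y i) (hX i) (hY i) (hXnn i) (hYnn i) (hXi i) (hYi i)
              (hssd i) hmono_a hconc_a
        _ = ∫ b, u (b * a) ∂μB := (integral_map (hX i).aemeasurable hma).symm
    rw [hstepX, hstepY]
    exact le_trans hineq2 hineq1

end Aux

/-- If, in each period `i`, the nonnegative integrable return `X i`
second-order stochastically dominates `Y i` (`∫_0^x (F_{Y i} − F_{X i}) dt ≥ 0` for
all `x ≥ 0`), and each family is mutually independent, then for every nondecreasing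
concave utility `u` on `[0, ∞)` making the composed products integrable,
`E[u(∏ i, X i)] ≥ E[u(∏ i, Y i)]`. -/
theorem ssd_of_products_of_ssd_each_period
    {Ω : Type*} [MeasurableSpace Ω] (P : Measure Ω) [IsProbabilityMeasure P]
    (n : ℕ) (X Y : Fin n → Ω → ℝ)
    (hX : ∀ i, Measurable (X i)) (hY : ∀ i, Measurable (Y i))
    (hXnn : ∀ i ω, 0 ≤ X i ω) (hYnn : ∀ i ω, 0 ≤ Y i ω)
    (hXi : ∀ i, Integrable (X i) P) (hYi : ∀ i, Integrable (Y i) P)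
    (hXindep : iIndepFun X P)
    (hYindep : iIndepFun Y P)
    (hssd : ∀ i, ∀ x : ℝ, 0 ≤ x →
      0 ≤ ∫ t in Set.Icc 0 x,
        ((P {ω | Y i ω ≤ t}).toReal - (P {ω | X i ω ≤ t}).toReal))
    (u : ℝ → ℝ) (hu : MonotoneOn u (Set.Ici 0)) (huc : ConcaveOn ℝ (Set.Ici 0) u)
    (huX : Integrable (fun ω => u (∏ i, X i ω)) P)
    (huY : Integrable (fun ω => u (∏ i, Y i ω)) P) :
    ∫ ω, u (∏ i, Y i ω) ∂P ≤ ∫ ω, u (∏ i, X i ω) ∂P := by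
  set U : ℝ → ℝ := fun t => u (max t 0) with hU
  have hUeq : ∀ t, 0 ≤ t → U t = u t := fun t ht => by simp [hU, max_eq_left ht]
  have hUmono : Monotone U := fun s t hst => hu (Set.mem_Ici.2 (le_max_right _ _)) (Set.mem_Ici.2 (le_max_right _ _))
    (max_le_max hst le_rfl)
  have hUconc : ConcaveOn ℝ (Set.Ici 0) U := by
    constructor
    · exact convex_Ici 0
    · intro x hx y hy a b ha hb hab
      have hx' : (0:ℝ) ≤ x := hx
      have hy' : (0:ℝ) ≤ y := hy
      have h1 : (0:ℝ) ≤ a * x + b * y := add_nonneg (mul_nonneg ha hx') (mul_nonneg hb hy')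
      have h2 := huc.2 hx hy ha hb hab
      simpa only [smul_eq_mul, hUeq _ h1, hUeq _ hx', hUeq _ hy'] using h2
  have h := ssd_aux_key P n X Y hX hY hXnn hYnn hXi hYi hXindep hYindep hssd Finset.univ
    U hUmono hUconc
  have e1 : ∀ ω, U (∏ i, X i ω) = u (∏ i, X i ω) := fun ω =>
    hUeq _ (Finset.prod_nonneg fun i _ => hXnn i ω)
  have e2 : ∀ ω, U (∏ i, Y i ω) = u (∏ i, Y i ω) := fun ω =>
    hUeq _ (Finset.prod_nonneg fun i _ => hYnn i ω)
  simpa only [e1, e2] using h
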